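/- Suppose g : E → ℝ → E is uniformly ℓ-Lipschitz with respect to ‖·‖_P (i.e. ‖g x t − g y t‖_P ≤ ℓ·‖x − y‖_P for all x, y ∈ E, t ≥ 0), satisfies the one-sided Lipschitz condition with rate γ̄ (with respect to ‖·‖_P) on [0, ∞), and there exists c > 0 with c ≤ γ̄(t) < ℓ for all t ≥ 0. Let 0 < h < 2·c/ℓ², let x* : ℝ → E satisfy g (x* t) t = 0 for all t ≥ 0, and let y : ℕ → E satisfy the explicit Euler recursion y (k+1) = y k + h • g (y k) (k·h) for all k. Then for every k ≥ 1, ‖y k − x* (k·h)‖_P ≤ (∏_{m=0}^{k−1} (1 − 2·h·γ̄(m·h) + h²·ℓ²)^(1/2)) · ‖y 0 − x* 0‖_P + (if k > 1 then ∑_{m=1}^{k−1} (∏_{r=m}^{k−1} (1 − 2·h·γ̄(r·h) + h²·ℓ²)^(1/2)) · ‖x* (m·h) − x* ((m−1)·h)‖_P else 0) + ‖x* (k·h) − x* ((k−1)·h)‖_P. -/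

import Mathlib

open Finset

/-- Weighted inner product `⟪u, P.mulVec v⟫` on Euclidean space. -/
noncomputable def wip {n : ℕ} (P : Matrix (Fin n) (Fin n) ℝ)
    (u v : EuclideanSpace ℝ (Fin n)) : ℝ :=
  ∑ i, u i * P.mulVec (fun j => v j) i

/-- Weighted norm `‖u‖_P = √⟪u, u⟫_P`. -/
noncomputable def wnorm {n : ℕ} (P : Matrix (Fin n) (Fin n) ℝ)
    (u : EuclideanSpace ℝ (Fin n)) : ℝ :=
  Real.sqrt (wip P u u)

section Helpers

variable {n : ℕ} {P : Matrix (Fin n) (Fin n) ℝ}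

lemma wip_expand (u v : EuclideanSpace ℝ (Fin n)) :
    wip P u v = ∑ i, ∑ j, u i * (P i j * v j) := by
  simp [wip, Matrix.mulVec, dotProduct, Finset.mul_sum]

lemma wip_comm (hs : P.IsSymm) (u v : EuclideanSpace ℝ (Fin n)) :
    wip P u v = wip P v u := by
  rw [wip_expand, wip_expand, Finset.sum_comm]
  exact Finset.sum_congr rfl fun i _ => Finset.sum_congr rfl fun j _ => by
    rw [← hs.apply i j]; ring

lemma wip_add_left (u v w : EuclideanSpace ℝ (Fin n)) :
    wip P (u + v) w = wip P u w + wip P v w := by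
  simp [wip_expand, PiLp.add_apply, add_mul, Finset.sum_add_distrib]

lemma wip_smul_left (a : ℝ) (u v : EuclideanSpace ℝ (Fin n)) :
    wip P (a • u) v = a * wip P u v := by
  simp [wip_expand, PiLp.smul_apply, smul_eq_mul, Finset.mul_sum, mul_assoc]

lemma wip_neg_left (u v : EuclideanSpace ℝ (Fin n)) :
    wip P (-u) v = -wip P u v := by
  simp [wip_expand, PiLp.neg_apply, neg_mul, Finset.sum_neg_distrib]

lemma wip_sub_left (u v w : EuclideanSpace ℝ (Fin n)) :
    wip P (u - v) w = wip P u w - wip P v w := by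
  rw [sub_eq_add_neg, wip_add_left, wip_neg_left, sub_eq_add_neg]

lemma wip_add_right (hs : P.IsSymm) (u v w : EuclideanSpace ℝ (Fin n)) :
    wip P u (v + w) = wip P u v + wip P u w := by
  rw [wip_comm hs, wip_add_left, wip_comm hs, wip_comm hs w]

lemma wip_smul_right (hs : P.IsSymm) (a : ℝ) (u v : EuclideanSpace ℝ (Fin n)) :
    wip P u (a • v) = a * wip P u v := by
  rw [wip_comm hs, wip_smul_left, wip_comm hs]

lemma wip_sub_right (hs : P.IsSymm) (u v w : EuclideanSpace ℝ (Fin n)) :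
    wip P u (v - w) = wip P u v - wip P u w := by
  rw [wip_comm hs, wip_sub_left, wip_comm hs, wip_comm hs w]

lemma wip_self_pos (hp : P.PosDef) {u : EuclideanSpace ℝ (Fin n)} (hu : u ≠ 0) :
    0 < wip P u u := by
  have h2 := hp.dotProduct_mulVec_pos (x := fun i => u i) (by
    intro hz
    apply hu
    ext i
    exact congrFun hz i)
  simpa [wip, dotProduct] using h2

lemma wip_self_nonneg (hp : P.PosDef) (u : EuclideanSpace ℝ (Fin n)) :
    0 ≤ wip P u u := by
  rcases eq_or_ne u 0 with rfl | hu
  · simp [wip_expand]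
  · exact (wip_self_pos hp hu).le

lemma wnorm_nonneg (u : EuclideanSpace ℝ (Fin n)) : 0 ≤ wnorm P u :=
  Real.sqrt_nonneg _

lemma sq_wnorm (hp : P.PosDef) (u : EuclideanSpace ℝ (Fin n)) :
    wnorm P u ^ 2 = wip P u u :=
  Real.sq_sqrt (wip_self_nonneg hp u)

lemma wip_le_mul (hs : P.IsSymm) (hp : P.PosDef) (u v : EuclideanSpace ℝ (Fin n)) :
    wip P u v ≤ wnorm P u * wnorm P v := by
  rcases eq_or_ne u 0 with rfl | hu
  · have h0 : wip P (0 : EuclideanSpace ℝ (Fin n)) v = 0 := by simp [wip_expand]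
    rw [h0]
    exact mul_nonneg (wnorm_nonneg _) (wnorm_nonneg _)
  rcases eq_or_ne v 0 with rfl | hv
  · have h0 : wip P u (0 : EuclideanSpace ℝ (Fin n)) = 0 := by simp [wip_expand]
    rw [h0]
    exact mul_nonneg (wnorm_nonneg _) (wnorm_nonneg _)
  have hau : 0 < wnorm P u := Real.sqrt_pos.mpr (wip_self_pos hp hu)
  have hbv : 0 < wnorm P v := Real.sqrt_pos.mpr (wip_self_pos hp hv)
  have h0 : 0 ≤ wip P (wnorm P v • u - wnorm P u • v) (wnorm P v • u - wnorm P u • v) :=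
    wip_self_nonneg hp _
  simp only [wip_sub_left, wip_sub_right hs, wip_smul_left, wip_smul_right hs,
    wip_comm hs v u] at h0
  have huu : wip P u u = wnorm P u ^ 2 := (sq_wnorm hp u).symm
  have hvv : wip P v v = wnorm P v ^ 2 := (sq_wnorm hp v).symm
  nlinarith [h0, huu, hvv, mul_pos hau hbv]

lemma wnorm_add_le (hs : P.IsSymm) (hp : P.PosDef) (u v : EuclideanSpace ℝ (Fin n)) :
    wnorm P (u + v) ≤ wnorm P u + wnorm P v := by
  have hcs := wip_le_mul hs hp u v
  have hexp : wip P (u + v) (u + v) = wip P u u + 2 * wip P u v + wip P v v := by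
    rw [wip_add_left, wip_add_right hs, wip_add_right hs, wip_comm hs v u]; ring
  have h1 : wip P (u + v) (u + v) ≤ (wnorm P u + wnorm P v) ^ 2 := by
    rw [hexp]
    nlinarith [sq_wnorm hp u, sq_wnorm hp v]
  calc wnorm P (u + v) = Real.sqrt (wip P (u + v) (u + v)) := rfl
    _ ≤ Real.sqrt ((wnorm P u + wnorm P v) ^ 2) := Real.sqrt_le_sqrt h1
    _ = wnorm P u + wnorm P v :=
        Real.sqrt_sq (add_nonneg (wnorm_nonneg _) (wnorm_nonneg _))

lemma wnorm_neg (u : EuclideanSpace ℝ (Fin n)) : wnorm P (-u) = wnorm P u := by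
  unfold wnorm
  rw [show wip P (-u) (-u) = wip P u u by
    rw [wip_neg_left]
    simp [wip_expand, PiLp.neg_apply, Finset.sum_neg_distrib]]

lemma wnorm_sub_comm (u v : EuclideanSpace ℝ (Fin n)) :
    wnorm P (u - v) = wnorm P (v - u) := by
  rw [← wnorm_neg (u - v), neg_sub]

end Helpers

theorem stmt_7 {n : ℕ} (P : Matrix (Fin n) (Fin n) ℝ)
    (hPsymm : P.IsSymm) (hPpos : P.PosDef)
    (g : EuclideanSpace ℝ (Fin n) → ℝ → EuclideanSpace ℝ (Fin n))
    (ℓ : ℝ)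
    (hLip : ∀ x y : EuclideanSpace ℝ (Fin n), ∀ t : ℝ, 0 ≤ t →
      wnorm P (g x t - g y t) ≤ ℓ * wnorm P (x - y))
    (gam : ℝ → ℝ)
    (hOSL : ∀ x y : EuclideanSpace ℝ (Fin n), ∀ t : ℝ, 0 ≤ t →
      wip P (x - y) (g x t - g y t) ≤ -gam t * (wnorm P (x - y)) ^ 2)
    (c : ℝ) (hc : 0 < c) (hgam : ∀ t : ℝ, 0 ≤ t → c ≤ gam t ∧ gam t < ℓ)
    (h : ℝ) (hh : 0 < h) (hh2 : h < 2 * c / ℓ ^ 2)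
    (xs : ℝ → EuclideanSpace ℝ (Fin n)) (hxs : ∀ t : ℝ, 0 ≤ t → g (xs t) t = 0)
    (y : ℕ → EuclideanSpace ℝ (Fin n))
    (hy : ∀ k : ℕ, y (k + 1) = y k + h • g (y k) ((k : ℝ) * h)) :
    ∀ k : ℕ, 1 ≤ k →
      wnorm P (y k - xs ((k : ℝ) * h)) ≤
        (∏ m ∈ Finset.range k,
            Real.sqrt (1 - 2 * h * gam ((m : ℝ) * h) + h ^ 2 * ℓ ^ 2)) *
          wnorm P (y 0 - xs 0) +
        (if 1 < k then
          ∑ m ∈ Finset.Icc 1 (k - 1),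
            (∏ r ∈ Finset.Icc m (k - 1),
                Real.sqrt (1 - 2 * h * gam ((r : ℝ) * h) + h ^ 2 * ℓ ^ 2)) *
              wnorm P (xs ((m : ℝ) * h) - xs (((m : ℝ) - 1) * h))
         else 0) +
        wnorm P (xs ((k : ℝ) * h) - xs (((k : ℝ) - 1) * h)) := by
  have hl0 : 0 < ℓ := lt_of_le_of_lt (le_of_lt hc) (lt_of_le_of_lt (hgam 0 le_rfl).1 (hgam 0 le_rfl).2)
  set Q : ℕ → ℝ := fun m => Real.sqrt (1 - 2 * h * gam ((m : ℝ) * h) + h ^ 2 * ℓ ^ 2) with hQ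
  have hQnn : ∀ m, 0 ≤ Q m := fun m => Real.sqrt_nonneg _
  -- one-step contraction
  have step : ∀ k : ℕ, wnorm P (y (k + 1) - xs ((k : ℝ) * h)) ≤
      Q k * wnorm P (y k - xs ((k : ℝ) * h)) := by
    intro k
    have ht : (0 : ℝ) ≤ (k : ℝ) * h := by positivity
    have hvv : g (y k) ((k : ℝ) * h) - g (xs ((k : ℝ) * h)) ((k : ℝ) * h)
        = g (y k) ((k : ℝ) * h) := by rw [hxs _ ht, sub_zero]
    have hOS := hOSL (y k) (xs ((k : ℝ) * h)) ((k : ℝ) * h) ht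
    have hL := hLip (y k) (xs ((k : ℝ) * h)) ((k : ℝ) * h) ht
    rw [hvv] at hOS hL
    have heq : y (k + 1) - xs ((k : ℝ) * h)
        = (y k - xs ((k : ℝ) * h)) + h • g (y k) ((k : ℝ) * h) := by
      rw [hy k, add_sub_right_comm]
    have h2' : wip P (g (y k) ((k : ℝ) * h)) (g (y k) ((k : ℝ) * h))
        ≤ ℓ ^ 2 * wnorm P (y k - xs ((k : ℝ) * h)) ^ 2 := by
      rw [← sq_wnorm hPpos]
      nlinarith [hL, wnorm_nonneg (P := P) (g (y k) ((k : ℝ) * h)),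
        wnorm_nonneg (P := P) (y k - xs ((k : ℝ) * h)), hl0.le]
    have hsq : wnorm P ((y k - xs ((k : ℝ) * h)) + h • g (y k) ((k : ℝ) * h)) ^ 2
        ≤ (1 - 2 * h * gam ((k : ℝ) * h) + h ^ 2 * ℓ ^ 2)
          * wnorm P (y k - xs ((k : ℝ) * h)) ^ 2 := by
      rw [sq_wnorm hPpos]
      simp only [wip_add_left, wip_add_right hPsymm, wip_smul_left, wip_smul_right hPsymm,
        wip_comm hPsymm (h • g (y k) ((k : ℝ) * h)) (y k - xs ((k : ℝ) * h)),
        wip_smul_left]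
      nlinarith [hOS, h2', sq_wnorm hPpos (y k - xs ((k : ℝ) * h)), hh, sq_nonneg h,
        mul_pos hh hh]
    have hfac : 0 ≤ 1 - 2 * h * gam ((k : ℝ) * h) + h ^ 2 * ℓ ^ 2 := by
      have hg := (hgam ((k : ℝ) * h) ht).2
      nlinarith [sq_nonneg (1 - h * ℓ), hh]
    calc wnorm P (y (k + 1) - xs ((k : ℝ) * h))
        = Real.sqrt (wnorm P ((y k - xs ((k : ℝ) * h)) + h • g (y k) ((k : ℝ) * h)) ^ 2) := by
          rw [heq, Real.sqrt_sq (wnorm_nonneg _)]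
      _ ≤ Real.sqrt ((1 - 2 * h * gam ((k : ℝ) * h) + h ^ 2 * ℓ ^ 2)
            * wnorm P (y k - xs ((k : ℝ) * h)) ^ 2) := Real.sqrt_le_sqrt hsq
      _ = Q k * wnorm P (y k - xs ((k : ℝ) * h)) := by
          rw [hQ, Real.sqrt_mul hfac, Real.sqrt_sq (wnorm_nonneg _)]
  -- one-step recursion with target point moved
  have rec1 : ∀ k : ℕ, wnorm P (y (k + 1) - xs (((k + 1 : ℕ) : ℝ) * h)) ≤
      Q k * wnorm P (y k - xs ((k : ℝ) * h))
      + wnorm P (xs (((k + 1 : ℕ) : ℝ) * h) - xs ((k : ℝ) * h)) := by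
    intro k
    have hsplit : y (k + 1) - xs (((k + 1 : ℕ) : ℝ) * h)
        = (y (k + 1) - xs ((k : ℝ) * h)) + (xs ((k : ℝ) * h) - xs (((k + 1 : ℕ) : ℝ) * h)) := by
      abel
    rw [hsplit]
    refine (wnorm_add_le hPsymm hPpos _ _).trans ?_
    exact add_le_add (step k) (le_of_eq (wnorm_sub_comm _ _))
  -- main induction
  have key : ∀ k : ℕ, 1 ≤ k →
      wnorm P (y k - xs ((k : ℝ) * h)) ≤
        (∏ m ∈ Finset.range k, Q m) * wnorm P (y 0 - xs 0)
        + (∑ m ∈ Finset.Icc 1 (k - 1), (∏ r ∈ Finset.Icc m (k - 1), Q r)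
            * wnorm P (xs ((m : ℝ) * h) - xs (((m : ℝ) - 1) * h)))
        + wnorm P (xs ((k : ℝ) * h) - xs (((k : ℝ) - 1) * h)) := by
    intro k hk
    induction k, hk using Nat.le_induction with
    | base =>
      have R := rec1 0
      norm_num at R ⊢
      linarith [R]
    | succ k hk ih =>
      obtain ⟨j, rfl⟩ : ∃ j, k = j + 1 := ⟨k - 1, by omega⟩
      simp only [Nat.add_sub_cancel] at ih ⊢
      have hD : ((((j + 1 + 1 : ℕ) : ℝ)) - 1) = (((j + 1 : ℕ) : ℝ)) := by push_cast; ring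
      rw [hD]
      have R := rec1 (j + 1)
      have ihs : Q (j + 1) * wnorm P (y (j + 1) - xs (((j + 1 : ℕ) : ℝ) * h)) ≤
          Q (j + 1) * ((∏ m ∈ Finset.range (j + 1), Q m) * wnorm P (y 0 - xs 0)
            + (∑ m ∈ Finset.Icc 1 j, (∏ r ∈ Finset.Icc m j, Q r)
                * wnorm P (xs ((m : ℝ) * h) - xs (((m : ℝ) - 1) * h)))
            + wnorm P (xs (((j + 1 : ℕ) : ℝ) * h) - xs ((((j + 1 : ℕ) : ℝ) - 1) * h))) :=
        mul_le_mul_of_nonneg_left ih (hQnn _)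
      have hsum : ∑ m ∈ Finset.Icc 1 (j + 1), (∏ r ∈ Finset.Icc m (j + 1), Q r)
            * wnorm P (xs ((m : ℝ) * h) - xs (((m : ℝ) - 1) * h))
          = Q (j + 1) * (∑ m ∈ Finset.Icc 1 j, (∏ r ∈ Finset.Icc m j, Q r)
              * wnorm P (xs ((m : ℝ) * h) - xs (((m : ℝ) - 1) * h)))
            + Q (j + 1) * wnorm P (xs (((j + 1 : ℕ) : ℝ) * h)
                - xs ((((j + 1 : ℕ) : ℝ) - 1) * h)) := by
        rw [Finset.sum_Icc_succ_top (Nat.succ_le_succ (Nat.zero_le j))]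
        rw [Finset.Icc_self, Finset.prod_singleton, Finset.mul_sum]
        congr 1
        refine Finset.sum_congr rfl fun m hm => ?_
        have hmj : m ≤ j + 1 := le_trans (Finset.mem_Icc.mp hm).2 (Nat.le_succ j)
        rw [Finset.prod_Icc_succ_top hmj]
        ring
      calc wnorm P (y (j + 1 + 1) - xs (((j + 1 + 1 : ℕ) : ℝ) * h))
          ≤ Q (j + 1) * wnorm P (y (j + 1) - xs (((j + 1 : ℕ) : ℝ) * h))
            + wnorm P (xs (((j + 1 + 1 : ℕ) : ℝ) * h) - xs (((j + 1 : ℕ) : ℝ) * h)) := R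
        _ ≤ Q (j + 1) * ((∏ m ∈ Finset.range (j + 1), Q m) * wnorm P (y 0 - xs 0)
              + (∑ m ∈ Finset.Icc 1 j, (∏ r ∈ Finset.Icc m j, Q r)
                  * wnorm P (xs ((m : ℝ) * h) - xs (((m : ℝ) - 1) * h)))
              + wnorm P (xs (((j + 1 : ℕ) : ℝ) * h) - xs ((((j + 1 : ℕ) : ℝ) - 1) * h)))
            + wnorm P (xs (((j + 1 + 1 : ℕ) : ℝ) * h) - xs (((j + 1 : ℕ) : ℝ) * h)) :=
            add_le_add_left ihs _
        _ = (∏ m ∈ Finset.range (j + 1 + 1), Q m) * wnorm P (y 0 - xs 0)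
            + (∑ m ∈ Finset.Icc 1 (j + 1), (∏ r ∈ Finset.Icc m (j + 1), Q r)
                * wnorm P (xs ((m : ℝ) * h) - xs (((m : ℝ) - 1) * h)))
            + wnorm P (xs (((j + 1 + 1 : ℕ) : ℝ) * h) - xs (((j + 1 : ℕ) : ℝ) * h)) := by
            rw [hsum, Finset.prod_range_succ Q (j + 1)]
            ring
  -- conclude
  intro k hk
  rcases eq_or_lt_of_le hk with h1 | h1
  · obtain rfl : k = 1 := h1.symm
    have K := key 1 le_rfl
    simp only [hQ] at K
    norm_num at K ⊢
    convert K using 2 <;> norm_num [hQ]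
  · rw [if_pos h1]
    have K := key k hk
    simp only [hQ] at K
    exact K
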